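/- Let k > t ≥ 1 and r ≥ 5 be integers, let n ≥ k + r·t, and let s = ⌈r/3⌉, or possibly s = ⌊r/3⌋ if r ≡ 1 (mod 3). Let I_1, ..., I_s be distinct t-stars in the k-element subsets of [n] with centres T_1, ..., T_s respectively such that |T_1 ∩ T_s| ≥ max(1, 2t - k), and let F = I_1 ∪ ... ∪ I_s. Let Ĩ_s be a t-star whose centre T̃_s is disjoint from T_1 ∪ ... ∪ T_s, and let F̃ = I_1 ∪ ... ∪ I_{s-1} ∪ Ĩ_s. Let (C_1, ..., C_s) be a partition of a set of r colours whose vector of part sizes (|C_1|, ..., |C_s|) is an optimal solution of MAX(r), let Φ(C) be the set of colourings of F in which every member F of the family receives a colour from the union of those C_i with F ∈ I_i, and let Φ̃(C) be defined analogously for F̃ (with Ĩ_s in place of I_s). Then |Φ̃(C)| ≥ (6/5)·|Φ(C)|, unless |C_1| = |C_s| = 2, in which case |Φ̃(C)| ≥ |Φ(C)|. -/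

import Mathlib

/-- The `t`-star of `k`-element subsets of `[n]` with centre `T`. -/
def setStar (n k : ℕ) (T : Finset (Fin n)) : Finset (Finset (Fin n)) :=
  Finset.univ.filter fun A : Finset (Fin n) => A.card = k ∧ T ⊆ A

/-- The set of feasible objective values of the problem `MAX(r)`. -/
def feasibleProds (r : ℕ) : Set ℕ :=
  {P : ℕ | ∃ (s' : ℕ) (m : Fin s' → ℕ), s' ≤ r ∧ (∀ i, 0 < m i) ∧
    (∑ i, m i) = r ∧ (∏ i, m i) = P}

attribute [local instance] Classical.propDecidable

lemma nat_card_constrained {α β : Type*} [Fintype β] (S : Finset α) (g : α → Finset β) :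
    Nat.card {φ : S → β // ∀ a : S, φ a ∈ g a.1} = ∏ a ∈ S, (g a).card := by
  have e : {φ : S → β // ∀ a : S, φ a ∈ g a.1} ≃ (∀ a : S, {x // x ∈ g a.1}) :=
    { toFun := fun φ a => ⟨φ.1 a, φ.2 a⟩
      invFun := fun ψ => ⟨fun a => (ψ a).1, fun a => (ψ a).2⟩
      left_inv := fun φ => rfl
      right_inv := fun ψ => rfl }
  rw [Nat.card_congr e, Nat.card_pi]
  rw [← Finset.prod_coe_sort S (fun a => (g a).card)]
  exact Finset.prod_congr rfl fun a _ => by simp [Nat.card_eq_finsetCard]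

lemma parts_ge_two {r s : ℕ} (hs2 : 2 ≤ s) (hsr : s + 1 ≤ r)
    (m : ℕ → ℕ) (hpos : ∀ i < s, 0 < m i) (hsum : ∑ i ∈ Finset.range s, m i = r)
    (hopt : IsGreatest (feasibleProds r) (∏ i ∈ Finset.range s, (m i))) :
    ∀ i < s, 2 ≤ m i := by
  by_contra hcon
  push_neg at hcon
  obtain ⟨j, hj, hmj⟩ := hcon
  have hmj1 : m j = 1 := by have := hpos j hj; omega
  obtain ⟨s', rfl⟩ : ∃ s', s = s' + 1 := ⟨s - 1, by omega⟩
  set F0 : Fin (s' + 1) → ℕ := fun i => m i with hF0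
  have hPfin : ∏ i ∈ Finset.range (s' + 1), m i = ∏ i : Fin (s' + 1), F0 i := by
    rw [Fin.prod_univ_eq_prod_range]
  have hSfin : ∑ i ∈ Finset.range (s' + 1), m i = ∑ i : Fin (s' + 1), F0 i := by
    rw [Fin.sum_univ_eq_sum_range]
  set jf : Fin (s' + 1) := ⟨j, hj⟩ with hjf
  have hx0 : 0 < s' := by omega
  set x0 : Fin s' := ⟨0, hx0⟩ with hx0d
  set ν : Fin s' → ℕ := fun x => if x = x0 then F0 (jf.succAbove x) + 1 else F0 (jf.succAbove x) with hν
  have hposn : ∀ x : Fin s', 0 < F0 (jf.succAbove x) := fun x => hpos _ (jf.succAbove x).isLt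
  have hsumsA : F0 jf + ∑ x : Fin s', F0 (jf.succAbove x) = r := by
    rw [← Fin.sum_univ_succAbove F0 jf, ← hSfin, hsum]
  have hνsum : ∑ x : Fin s', ν x = r := by
    have h1 : ∑ x : Fin s', ν x
        = ∑ x : Fin s', (F0 (jf.succAbove x) + if x = x0 then 1 else 0) := by
      apply Finset.sum_congr rfl
      intro x _
      by_cases h : x = x0 <;> simp [hν, h]
    rw [h1, Finset.sum_add_distrib]
    have h2 : (∑ x : Fin s', if x = x0 then 1 else 0) = 1 := by
      simp [Finset.sum_ite_eq]
    rw [h2]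
    have : F0 jf = 1 := hmj1
    omega
  have hprodA : ∏ x : Fin s', F0 (jf.succAbove x) = ∏ i ∈ Finset.range (s' + 1), m i := by
    rw [hPfin, Fin.prod_univ_succAbove F0 jf]
    have : F0 jf = 1 := hmj1
    rw [this, one_mul]
  have hkey : ∏ x : Fin s', ν x = (∏ x : Fin s', F0 (jf.succAbove x)) + ∏ x ∈ Finset.univ.erase x0, F0 (jf.succAbove x) := by
    rw [← Finset.mul_prod_erase Finset.univ ν (Finset.mem_univ x0),
        ← Finset.mul_prod_erase Finset.univ (fun x => F0 (jf.succAbove x)) (Finset.mem_univ x0)]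
    have herase : ∏ x ∈ Finset.univ.erase x0, ν x = ∏ x ∈ Finset.univ.erase x0, F0 (jf.succAbove x) := by
      apply Finset.prod_congr rfl
      intro x hx
      have : x ≠ x0 := (Finset.mem_erase.1 hx).1
      simp [hν, this]
    rw [herase]
    have : ν x0 = F0 (jf.succAbove x0) + 1 := by simp [hν]
    rw [this]
    ring
  have hfeas : (∏ x : Fin s', ν x) ∈ feasibleProds r := by
    refine ⟨s', ν, by omega, ?_, hνsum, rfl⟩
    intro x
    have := hposn x
    by_cases h : x = x0 <;> simp [hν, h] <;> omega
  have hle := hopt.2 hfeas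
  rw [hkey, hprodA] at hle
  have hp2 : 0 < ∏ x ∈ Finset.univ.erase x0, F0 (jf.succAbove x) :=
    Finset.prod_pos (fun x _ => hposn x)
  omega

lemma exists_psi {α : Type*} [DecidableEq α] (D E : Finset α) (hdisj : Disjoint D E)
    (hcard : D.card = E.card) :
    ∃ Ψ : Finset α → Finset α,
      (∀ A, E ⊆ A → ¬ D ⊆ A →
        (Ψ A).card = A.card ∧ D ⊆ Ψ A ∧ ¬ E ⊆ Ψ A ∧ A \ E ⊆ Ψ A ∧
        (Ψ A ∩ E = ∅ → A ∩ D = ∅)) ∧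
      ∀ A1 A2, E ⊆ A1 → ¬ D ⊆ A1 → E ⊆ A2 → ¬ D ⊆ A2 → Ψ A1 = Ψ A2 → A1 = A2 := by
  have e : (D : Finset α) ≃ (E : Finset α) := Finset.equivOfCardEq hcard
  set f : α → α := fun x => if h : x ∈ D then (e ⟨x, h⟩ : α) else x with hf
  have hf1 : ∀ x ∈ D, f x ∈ E := fun x hx => by simp [hf, hx, (e ⟨x, hx⟩).2]
  have hfinj : ∀ x ∈ D, ∀ y ∈ D, f x = f y → x = y := by
    intro x hx y hy hxy
    simp only [hf, dif_pos hx, dif_pos hy] at hxy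
    exact congrArg Subtype.val (e.injective (Subtype.ext hxy))
  set Ψ : Finset α → Finset α := fun A => (A \ E) ∪ D ∪ (A ∩ D).image f with hΨ
  have himgE : ∀ A : Finset α, (A ∩ D).image f ⊆ E := by
    intro A x hx
    rcases Finset.mem_image.1 hx with ⟨y, hy, rfl⟩
    exact hf1 y (Finset.mem_inter.1 hy).2
  have hinterE : ∀ A : Finset α, Ψ A ∩ E = (A ∩ D).image f := by
    intro A
    ext x
    simp only [hΨ, Finset.mem_inter, Finset.mem_union, Finset.mem_sdiff]
    constructor
    · rintro ⟨(⟨⟨_, hxe⟩ | hxD⟩ | hxi), hxE⟩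
      · exact absurd hxE hxe
      · exact absurd hxE (Finset.disjoint_left.1 hdisj hxD)
      · exact hxi
    · intro hx
      exact ⟨Or.inr hx, himgE A hx⟩
  have himgcard : ∀ A : Finset α, ((A ∩ D).image f).card = (A ∩ D).card := by
    intro A
    exact Finset.card_image_of_injOn
      (fun x hx y hy => hfinj x (Finset.mem_inter.1 hx).2 y (Finset.mem_inter.1 hy).2)
  refine ⟨Ψ, ?_, ?_⟩
  · intro A hEA hDA
    have hADlt : (A ∩ D).card < D.card := by
      refine Finset.card_lt_card ⟨Finset.inter_subset_right, fun hsub => hDA fun x hx => ?_⟩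
      exact (Finset.mem_inter.1 (hsub hx)).1
    refine ⟨?_, ?_, ?_, ?_, ?_⟩
    · -- card
      have h1 : (A \ E) ∪ D = (A \ E) ∪ (D \ A) := by
        ext x
        simp only [Finset.mem_union, Finset.mem_sdiff]
        constructor
        · rintro (h | hD)
          · exact Or.inl h
          · by_cases hA : x ∈ A
            · exact Or.inl ⟨hA, Finset.disjoint_left.1 hdisj hD⟩
            · exact Or.inr ⟨hD, hA⟩
        · rintro (h | ⟨h, _⟩)
          · exact Or.inl h
          · exact Or.inr h
      have hd1 : Disjoint (A \ E) (D \ A) := by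
        rw [Finset.disjoint_left]
        intro x hx h2
        simp only [Finset.mem_sdiff] at hx h2
        exact h2.2 hx.1
      have hd2 : Disjoint ((A \ E) ∪ (D \ A)) ((A ∩ D).image f) := by
        rw [Finset.disjoint_left]
        intro x hx hxi
        have hxE := himgE A hxi
        rcases Finset.mem_union.1 hx with hAE | hD
        · exact (Finset.mem_sdiff.1 hAE).2 hxE
        · exact Finset.disjoint_left.1 hdisj (Finset.mem_sdiff.1 hD).1 hxE
      have : (Ψ A).card = (A \ E).card + (D \ A).card + ((A ∩ D).image f).card := by
        rw [hΨ]
        simp only []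
        rw [h1, Finset.card_union_of_disjoint hd2, Finset.card_union_of_disjoint hd1]
      rw [this, himgcard, Finset.card_sdiff_of_subset hEA]
      have h3 : (D \ A).card + (D ∩ A).card = D.card := Finset.card_sdiff_add_card_inter D A
      have h4 : (D ∩ A) = (A ∩ D) := Finset.inter_comm D A
      have h5 : E.card ≤ A.card := Finset.card_le_card hEA
      rw [h4] at h3
      omega
    · intro x hx; exact Finset.mem_union.2 (Or.inl (Finset.mem_union.2 (Or.inr hx)))
    · intro hEsub
      have hsub : E ⊆ (A ∩ D).image f := by
        intro x hxE
        rw [← hinterE A]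
        exact Finset.mem_inter.2 ⟨hEsub hxE, hxE⟩
      have := Finset.card_le_card hsub
      rw [himgcard] at this
      omega
    · intro x hx; exact Finset.mem_union.2 (Or.inl (Finset.mem_union.2 (Or.inl hx)))
    · intro hempty
      rw [hinterE A] at hempty
      exact Finset.image_eq_empty.1 hempty
  · -- injectivity
    have key : ∀ A, E ⊆ A → ¬ D ⊆ A → ∀ x,
        x ∈ A ↔ (x ∈ E ∨ (x ∈ D ∧ f x ∈ Ψ A) ∨ (x ∉ D ∧ x ∉ E ∧ x ∈ Ψ A)) := by
      intro A hEA hDA x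
      constructor
      · intro hxA
        by_cases hxE : x ∈ E
        · exact Or.inl hxE
        by_cases hxD : x ∈ D
        · refine Or.inr (Or.inl ⟨hxD, ?_⟩)
          have : f x ∈ (A ∩ D).image f :=
            Finset.mem_image.2 ⟨x, Finset.mem_inter.2 ⟨hxA, hxD⟩, rfl⟩
          exact Finset.mem_union.2 (Or.inr this)
        · refine Or.inr (Or.inr ⟨hxD, hxE, ?_⟩)
          exact Finset.mem_union.2 (Or.inl (Finset.mem_union.2 (Or.inl (Finset.mem_sdiff.2 ⟨hxA, hxE⟩))))
      · rintro (hxE | ⟨hxD, hfx⟩ | ⟨hxD, hxE, hxΨ⟩)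
        · exact hEA hxE
        · have : f x ∈ Ψ A ∩ E := Finset.mem_inter.2 ⟨hfx, hf1 x hxD⟩
          rw [hinterE A] at this
          rcases Finset.mem_image.1 this with ⟨y, hy, hyx⟩
          have := hfinj y (Finset.mem_inter.1 hy).2 x hxD hyx
          rw [← this]
          exact (Finset.mem_inter.1 hy).1
        · rcases Finset.mem_union.1 hxΨ with h | hxi
          · rcases Finset.mem_union.1 h with h2 | h2
            · exact (Finset.mem_sdiff.1 h2).1
            · exact absurd h2 hxD
          · exact absurd (himgE A hxi) hxE
    intro A1 A2 hE1 hD1 hE2 hD2 heq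
    ext x
    rw [key A1 hE1 hD1 x, key A2 hE2 hD2 x, heq]


/-- weight: sum of colour-class sizes over stars among the first `u` whose centre is inside `A`. -/
def bW {n r : ℕ} (T : ℕ → Finset (Fin n)) (Cp : ℕ → Finset (Fin r)) (u : ℕ)
    (A : Finset (Fin n)) : ℕ :=
  ∑ i ∈ (Finset.range u).filter (fun i => T i ⊆ A), (Cp i).card

/-- weight for the modified family. -/
noncomputable def wNW {n r : ℕ} (T : ℕ → Finset (Fin n)) (Tnew : Finset (Fin n)) (Cp : ℕ → Finset (Fin r))
    (s : ℕ) (A : Finset (Fin n)) : ℕ :=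
  ∑ i ∈ (Finset.range s).filter
    (fun i => (i < s-1 ∧ T i ⊆ A) ∨ (i = s-1 ∧ Tnew ⊆ A)), (Cp i).card

/-- truncated weight. -/
def capw (w : ℕ) : ℕ := if w = 0 then 1 else w

def Kfam (n k : ℕ) : Finset (Finset (Fin n)) :=
  Finset.univ.filter (fun A : Finset (Fin n) => A.card = k)

def Ffam (n k s : ℕ) (T : ℕ → Finset (Fin n)) : Finset (Finset (Fin n)) :=
  Finset.univ.filter fun A : Finset (Fin n) =>
    A.card = k ∧ ∃ i ∈ Finset.range s, T i ⊆ A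

noncomputable def FnewFam (n k s : ℕ) (T : ℕ → Finset (Fin n)) (Tnew : Finset (Fin n)) :
    Finset (Finset (Fin n)) :=
  Finset.univ.filter fun A : Finset (Fin n) =>
    A.card = k ∧ ((∃ i ∈ Finset.range (s - 1), T i ⊆ A) ∨ Tnew ⊆ A)

lemma final_comb (c11 x10 y10 x01 y01 c00 : ℕ) (h : x10 * y01 ≤ y10 * x01) :
    c11 * x10 * (y01 * c00) ≤ c11 * y10 * (x01 * c00) := by
  calc c11 * x10 * (y01 * c00) = (c11 * c00) * (x10 * y01) := by ring
    _ ≤ (c11 * c00) * (y10 * x01) := Nat.mul_le_mul_left _ h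
    _ = c11 * y10 * (x01 * c00) := by ring

lemma final_comb2 (c11 x10 y10 x01 y01 c00 : ℕ) (h : 6 * (x10 * y01) ≤ 5 * (y10 * x01)) :
    6 * (c11 * x10 * (y01 * c00)) ≤ 5 * (c11 * y10 * (x01 * c00)) := by
  calc 6 * (c11 * x10 * (y01 * c00)) = (c11 * c00) * (6 * (x10 * y01)) := by ring
    _ ≤ (c11 * c00) * (5 * (y10 * x01)) := Nat.mul_le_mul_left _ h
    _ = 5 * (c11 * y10 * (x01 * c00)) := by ring

lemma filter_inst_eq {α : Type*} (s : Finset α) (p : α → Prop)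
    (h1 h2 : DecidablePred p) :
    @Finset.filter α p h1 s = @Finset.filter α p h2 s := by
  ext x
  rw [@Finset.mem_filter _ _ h1, @Finset.mem_filter _ _ h2]

lemma prod_split4 {α M : Type*} [CommMonoid M] (K : Finset α) (p q : α → Prop)
    (W : α → M) :
    ∏ A ∈ K, W A =
      (∏ A ∈ K.filter (fun A => p A ∧ q A), W A) *
        (∏ A ∈ K.filter (fun A => p A ∧ ¬ q A), W A) *
      ((∏ A ∈ K.filter (fun A => ¬ p A ∧ q A), W A) *
        (∏ A ∈ K.filter (fun A => ¬ p A ∧ ¬ q A), W A)) := by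
  classical
  rw [← Finset.prod_filter_mul_prod_filter_not K p W]
  congr 1
  · rw [← Finset.prod_filter_mul_prod_filter_not (K.filter p) q W,
      Finset.filter_filter, Finset.filter_filter]
  · rw [← Finset.prod_filter_mul_prod_filter_not (K.filter (fun A => ¬ p A)) q W,
      Finset.filter_filter, Finset.filter_filter]

noncomputable def Hfun (mm c : ℕ) : ℝ := if c ≤ 1 then (mm : ℝ) else ((c : ℝ) + mm) / c

lemma Hfun_pos {mm : ℕ} (h : 1 ≤ mm) (c : ℕ) : 0 < Hfun mm c := by
  rw [Hfun]
  split
  · exact_mod_cast h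
  · apply div_pos
    · have : (0:ℝ) ≤ (c:ℝ) := Nat.cast_nonneg c
      have : (0:ℝ) ≤ (mm:ℝ) := Nat.cast_nonneg mm
      positivity
    · have : 2 ≤ c := by omega
      have : (2:ℝ) ≤ (c:ℝ) := by exact_mod_cast this
      linarith

lemma Hfun_anti {mm : ℕ} (h : 2 ≤ mm) (c : ℕ) : Hfun mm (c + 1) ≤ Hfun mm c := by
  have hm : (2:ℝ) ≤ (mm:ℝ) := by exact_mod_cast h
  match c with
  | 0 => simp [Hfun]
  | 1 =>
    rw [Hfun, Hfun, if_neg (by omega), if_pos (by omega)]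
    rw [div_le_iff₀ (by norm_num)]
    push_cast
    linarith
  | (c+2) =>
    rw [Hfun, Hfun, if_neg (by omega), if_neg (by omega)]
    have hc : (0:ℝ) < ((c:ℝ) + 2) := by positivity
    have hc3 : (0:ℝ) < ((c:ℝ) + 3) := by positivity
    rw [div_le_div_iff₀ (by push_cast; linarith) (by push_cast; linarith)]
    push_cast
    nlinarith
lemma Hfun_q_le_one {mm : ℕ} (h : 2 ≤ mm) (β : ℕ) :
    Hfun mm β / Hfun mm (β - 1) ≤ 1 := by
  match β with
  | 0 =>
    show Hfun mm 0 / Hfun mm 0 ≤ 1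
    rw [div_self (ne_of_gt (Hfun_pos (by omega) 0))]
  | (β+1) =>
    rw [div_le_one (Hfun_pos (by omega) _)]
    simp only [Nat.add_sub_cancel]
    exact Hfun_anti h β

lemma Hfun_q_pos {mm : ℕ} (h : 1 ≤ mm) (β : ℕ) :
    0 < Hfun mm β / Hfun mm (β - 1) :=
  div_pos (Hfun_pos h _) (Hfun_pos h _)

lemma Hfun_tel {mm : ℕ} (h : 1 ≤ mm) (c : ℕ) :
    Hfun mm c = mm * ∏ β ∈ Finset.Icc 1 c, (Hfun mm β / Hfun mm (β - 1)) := by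
  induction c with
  | zero => simp [Hfun]
  | succ c ih =>
    rw [Finset.prod_Icc_succ_top (by omega), show c + 1 - 1 = c from rfl,
      ← mul_assoc, ← ih, mul_comm (Hfun mm c), div_mul_cancel₀]
    exact ne_of_gt (Hfun_pos h c)

lemma Hfun_tel_cap {mm : ℕ} (h : 1 ≤ mm) (c R : ℕ) (hcR : c ≤ R) :
    Hfun mm c = mm * ∏ β ∈ Finset.Icc 1 R,
      (if β ≤ c then Hfun mm β / Hfun mm (β - 1) else 1) := by
  rw [Hfun_tel h c]
  congr 1
  rw [← Finset.prod_filter]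
  congr 1
  ext β
  simp only [Finset.mem_filter, Finset.mem_Icc]
  omega

set_option maxHeartbeats 4000000 in
theorem stmt_13 (k t r s n : ℕ) (ht : 1 ≤ t) (htk : t < k) (hr : 5 ≤ r)
    (hn : k + r * t ≤ n)
    -- `s = ⌈r/3⌉`, or possibly `s = ⌊r/3⌋` if `r ≡ 1 (mod 3)`
    (hs : s = (r + 2) / 3 ∨ (r % 3 = 1 ∧ s = r / 3))
    -- `I_1, ..., I_s` are distinct `t`-stars with centres `T 0, ..., T (s-1)`
    (T : ℕ → Finset (Fin n)) (hT : ∀ i < s, (T i).card = t)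
    (hTdist : ∀ i < s, ∀ j < s, i ≠ j → setStar n k (T i) ≠ setStar n k (T j))
    -- `|T_1 ∩ T_s| ≥ max(1, 2t - k)`
    (hT1s : max 1 (2 * t - k) ≤ (T 0 ∩ T (s - 1)).card)
    -- `T̃_s` is a `t`-set disjoint from `T_1 ∪ ... ∪ T_s`
    (Tnew : Finset (Fin n)) (hTnew : Tnew.card = t)
    (hTnewdisj : Disjoint Tnew ((Finset.range s).biUnion T))
    -- `(C_1, ..., C_s)` is a partition of the `r` colours
    (Cp : ℕ → Finset (Fin r))
    (hCppos : ∀ i < s, 0 < (Cp i).card)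
    (hCpdisj : ∀ i < s, ∀ j < s, i ≠ j → Disjoint (Cp i) (Cp j))
    (hCpcover : (Finset.range s).biUnion Cp = Finset.univ)
    -- whose vector of part sizes is an optimal solution of `MAX(r)`
    (hCpopt : IsGreatest (feasibleProds r) (∏ i ∈ Finset.range s, (Cp i).card)) :
    -- `F = I_1 ∪ ... ∪ I_s`,  `F̃ = I_1 ∪ ... ∪ I_{s-1} ∪ Ĩ_s`
    (let F : Finset (Finset (Fin n)) :=
      Finset.univ.filter fun A : Finset (Fin n) =>
        A.card = k ∧ ∃ i ∈ Finset.range s, T i ⊆ A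
    let Fnew : Finset (Finset (Fin n)) :=
      Finset.univ.filter fun A : Finset (Fin n) =>
        A.card = k ∧ ((∃ i ∈ Finset.range (s - 1), T i ⊆ A) ∨ Tnew ⊆ A)
    -- `|Φ(C)|` and `|Φ̃(C)|`
    let Phi : ℕ := Nat.card {φ : F → Fin r //
      ∀ A : F, ∃ i ∈ Finset.range s, T i ⊆ (A : Finset (Fin n)) ∧ φ A ∈ Cp i}
    let PhiNew : ℕ := Nat.card {φ : Fnew → Fin r //
      ∀ A : Fnew, ∃ i ∈ Finset.range s,
        ((i < s - 1 ∧ T i ⊆ (A : Finset (Fin n))) ∨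
          (i = s - 1 ∧ Tnew ⊆ (A : Finset (Fin n)))) ∧ φ A ∈ Cp i}
    -- conclusion: `|Φ̃(C)| ≥ (6/5)|Φ(C)|`, unless `|C_1| = |C_s| = 2`, in which
    -- case `|Φ̃(C)| ≥ |Φ(C)|`
    ((Cp 0).card = 2 ∧ (Cp (s - 1)).card = 2 → Phi ≤ PhiNew) ∧
      (¬((Cp 0).card = 2 ∧ (Cp (s - 1)).card = 2) → 6 * Phi ≤ 5 * PhiNew)) := by
  have hs2 : 2 ≤ s := by rcases hs with h | ⟨h1, h2⟩ <;> omega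
  have hsr : s + 1 ≤ r := by rcases hs with h | ⟨h1, h2⟩ <;> omega
  have hparts : ∀ i < s, 2 ≤ (Cp i).card := by
    apply parts_ge_two hs2 hsr _ hCppos _ hCpopt
    have h1 : ((Finset.range s).biUnion Cp).card = ∑ i ∈ Finset.range s, (Cp i).card :=
      Finset.card_biUnion (fun i hi j hj hij =>
        hCpdisj i (Finset.mem_range.1 hi) j (Finset.mem_range.1 hj) hij)
    rw [hCpcover] at h1
    simpa using h1.symm
  have hs1 : 1 ≤ s := by omega
  have hToldcard : (T (s-1)).card = t := hT _ (by omega)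
  have hT0card : (T 0).card = t := hT 0 (by omega)
  have hcap1 : 1 ≤ (T 0 ∩ T (s-1)).card := le_trans (le_max_left _ _) hT1s
  have hcap2 : 2 * t - k ≤ (T 0 ∩ T (s-1)).card := le_trans (le_max_right _ _) hT1s
  have hTnewTi : ∀ i < s, Disjoint Tnew (T i) := fun i hi =>
    Finset.disjoint_of_subset_right (Finset.subset_biUnion_of_mem T (Finset.mem_range.2 hi)) hTnewdisj
  have hTnewTold : Disjoint Tnew (T (s-1)) := hTnewTi _ (by omega)
  have hmm2 : 2 ≤ (Cp (s-1)).card := hparts _ (by omega)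
  have hrange : Finset.range s = insert (s-1) (Finset.range (s-1)) := by
    conv_lhs => rw [show s = (s-1)+1 by omega]
    rw [Finset.range_add_one]
  have hnotmem : (s-1) ∉ Finset.range (s-1) := by simp
  have hwFb : ∀ A, bW T Cp s A
      = bW T Cp (s-1) A + (if T (s-1) ⊆ A then (Cp (s-1)).card else 0) := by
    intro A
    simp only [bW]
    rw [hrange, Finset.filter_insert]
    by_cases h : T (s-1) ⊆ A
    · rw [if_pos h, Finset.sum_insert (fun hc => hnotmem (Finset.mem_of_mem_filter _ hc)),
        if_pos h, add_comm]
    · rw [if_neg h, if_neg h, add_zero]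
  have hwNb : ∀ A, wNW T Tnew Cp s A
      = bW T Cp (s-1) A + (if Tnew ⊆ A then (Cp (s-1)).card else 0) := by
    intro A
    simp only [wNW, bW]
    rw [hrange, Finset.filter_insert]
    have hcong : (Finset.range (s-1)).filter
        (fun i => (i < s-1 ∧ T i ⊆ A) ∨ (i = s-1 ∧ Tnew ⊆ A)) =
        (Finset.range (s-1)).filter (fun i => T i ⊆ A) := by
      apply Finset.filter_congr
      intro i hi
      have hi' : i < s-1 := Finset.mem_range.1 hi
      constructor
      · rintro (⟨_, h2⟩ | ⟨heq, _⟩)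
        · exact h2
        · omega
      · intro h2
        exact Or.inl ⟨hi', h2⟩
    by_cases h : Tnew ⊆ A
    · rw [if_pos (Or.inr ⟨rfl, h⟩),
        Finset.sum_insert (fun hc => hnotmem (Finset.mem_of_mem_filter _ hc)), hcong,
        if_pos h, add_comm]
    · rw [if_neg ?hneg, hcong, if_neg h, add_zero]
      case hneg =>
        rintro (⟨h1, _⟩ | ⟨_, h2⟩)
        · omega
        · exact h h2
  have hbpos : ∀ (A : Finset (Fin n)) (i : ℕ), i < s-1 → T i ⊆ A → 0 < bW T Cp (s-1) A := by
    intro A i hi hTi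
    have hmem : i ∈ (Finset.range (s-1)).filter (fun i => T i ⊆ A) :=
      Finset.mem_filter.2 ⟨Finset.mem_range.2 hi, hTi⟩
    have hle : (Cp i).card ≤ ∑ j ∈ (Finset.range (s-1)).filter (fun i => T i ⊆ A), (Cp j).card :=
      Finset.single_le_sum (f := fun j => (Cp j).card) (fun j _ => Nat.zero_le _) hmem
    have his : i < s := by omega
    simp only [bW]
    exact lt_of_lt_of_le (hCppos i his) hle
  have hcapFS1 : ∀ A, T (s-1) ⊆ A →
      capw (bW T Cp s A) = bW T Cp (s-1) A + (Cp (s-1)).card := by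
    intro A h
    rw [capw, hwFb A, if_pos h, if_neg (by omega)]
  have hcapFS0 : ∀ A, ¬ T (s-1) ⊆ A →
      capw (bW T Cp s A) = capw (bW T Cp (s-1) A) := by
    intro A h
    rw [capw, hwFb A, if_neg h, add_zero, capw]
  have hcapNS1 : ∀ A, Tnew ⊆ A →
      capw (wNW T Tnew Cp s A) = bW T Cp (s-1) A + (Cp (s-1)).card := by
    intro A h
    rw [capw, hwNb A, if_pos h, if_neg (by omega)]
  have hcapNS0 : ∀ A, ¬ Tnew ⊆ A →
      capw (wNW T Tnew Cp s A) = capw (bW T Cp (s-1) A) := by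
    intro A h
    rw [capw, hwNb A, if_neg h, add_zero, capw]
  have hprodF : ∏ A ∈ Ffam n k s T, bW T Cp s A = ∏ A ∈ Kfam n k, capw (bW T Cp s A) := by
    have hsub : Ffam n k s T ⊆ Kfam n k := by
      intro A hA
      simp only [Ffam, Finset.mem_filter] at hA
      simp only [Kfam, Finset.mem_filter]
      exact ⟨hA.1, hA.2.1⟩
    rw [← Finset.prod_subset hsub (fun A hA hnA => ?_)]
    · apply Finset.prod_congr rfl
      intro A hA
      simp only [Ffam, Finset.mem_filter] at hA
      obtain ⟨i, hi, hTi⟩ := hA.2.2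
      have hi' : i < s := Finset.mem_range.1 hi
      have hpos : 0 < bW T Cp s A := by
        rw [hwFb A]
        by_cases hc : i = s - 1
        · rw [if_pos (hc ▸ hTi)]
          omega
        · have := hbpos A i (by omega) hTi
          omega
      rw [capw, if_neg (by omega)]
    · have h0 : bW T Cp s A = 0 := by
        simp only [Kfam, Finset.mem_filter] at hA
        have hnex : ¬ ∃ i ∈ Finset.range s, T i ⊆ A := by
          intro hex
          apply hnA
          simp only [Ffam, Finset.mem_filter]
          exact ⟨hA.1, hA.2, hex⟩
        rw [hwFb A, if_neg (fun hc => hnex ⟨s-1, Finset.mem_range.2 (by omega), hc⟩), add_zero]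
        apply Finset.sum_eq_zero
        intro i hi
        have h1 := Finset.mem_range.1 (Finset.mem_filter.1 hi).1
        exact absurd ⟨i, Finset.mem_range.2 (by omega), (Finset.mem_filter.1 hi).2⟩ hnex
      rw [capw, if_pos h0]
  have hprodFnew : ∏ A ∈ FnewFam n k s T Tnew, wNW T Tnew Cp s A
      = ∏ A ∈ Kfam n k, capw (wNW T Tnew Cp s A) := by
    have hsub : FnewFam n k s T Tnew ⊆ Kfam n k := by
      intro A hA
      simp only [FnewFam, Finset.mem_filter] at hA
      simp only [Kfam, Finset.mem_filter]
      exact ⟨hA.1, hA.2.1⟩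
    rw [← Finset.prod_subset hsub (fun A hA hnA => ?_)]
    · apply Finset.prod_congr rfl
      intro A hA
      simp only [FnewFam, Finset.mem_filter] at hA
      have hpos : 0 < wNW T Tnew Cp s A := by
        rw [hwNb A]
        rcases hA.2.2 with ⟨i, hi, hTi⟩ | hTn
        · have := hbpos A i (Finset.mem_range.1 hi) hTi
          omega
        · rw [if_pos hTn]
          omega
      rw [capw, if_neg (by omega)]
    · have h0 : wNW T Tnew Cp s A = 0 := by
        simp only [Kfam, Finset.mem_filter] at hA
        have hnex : ¬ ((∃ i ∈ Finset.range (s-1), T i ⊆ A) ∨ Tnew ⊆ A) := by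
          intro hex
          apply hnA
          simp only [FnewFam, Finset.mem_filter]
          exact ⟨hA.1, hA.2, hex⟩
        rw [hwNb A, if_neg (fun hc => hnex (Or.inr hc)), add_zero]
        apply Finset.sum_eq_zero
        intro i hi
        exact absurd (Or.inl ⟨i, (Finset.mem_filter.1 hi).1, (Finset.mem_filter.1 hi).2⟩) hnex
      rw [capw, if_pos h0]
  have hsplit1 : ∏ A ∈ Kfam n k, capw (bW T Cp s A) =
      (∏ A ∈ (Kfam n k).filter (fun A => T (s-1) ⊆ A ∧ Tnew ⊆ A),
          (bW T Cp (s-1) A + (Cp (s-1)).card)) *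
        (∏ A ∈ (Kfam n k).filter (fun A => T (s-1) ⊆ A ∧ ¬ Tnew ⊆ A),
          (bW T Cp (s-1) A + (Cp (s-1)).card)) *
      ((∏ A ∈ (Kfam n k).filter (fun A => ¬ T (s-1) ⊆ A ∧ Tnew ⊆ A),
          capw (bW T Cp (s-1) A)) *
        (∏ A ∈ (Kfam n k).filter (fun A => ¬ T (s-1) ⊆ A ∧ ¬ Tnew ⊆ A),
          capw (bW T Cp (s-1) A))) := by
    rw [prod_split4 (Kfam n k) (fun A => T (s-1) ⊆ A) (fun A => Tnew ⊆ A)]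
    refine congrArg₂ _ (congrArg₂ _ ?_ ?_) (congrArg₂ _ ?_ ?_) <;>
      refine Finset.prod_congr (filter_inst_eq _ _ _ _) (fun A hA => ?_)
    · exact hcapFS1 A ((Finset.mem_filter.1 hA).2).1
    · exact hcapFS1 A ((Finset.mem_filter.1 hA).2).1
    · exact hcapFS0 A ((Finset.mem_filter.1 hA).2).1
    · exact hcapFS0 A ((Finset.mem_filter.1 hA).2).1
  have hsplit2 : ∏ A ∈ Kfam n k, capw (wNW T Tnew Cp s A) =
      (∏ A ∈ (Kfam n k).filter (fun A => T (s-1) ⊆ A ∧ Tnew ⊆ A),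
          (bW T Cp (s-1) A + (Cp (s-1)).card)) *
        (∏ A ∈ (Kfam n k).filter (fun A => T (s-1) ⊆ A ∧ ¬ Tnew ⊆ A),
          capw (bW T Cp (s-1) A)) *
      ((∏ A ∈ (Kfam n k).filter (fun A => ¬ T (s-1) ⊆ A ∧ Tnew ⊆ A),
          (bW T Cp (s-1) A + (Cp (s-1)).card)) *
        (∏ A ∈ (Kfam n k).filter (fun A => ¬ T (s-1) ⊆ A ∧ ¬ Tnew ⊆ A),
          capw (bW T Cp (s-1) A))) := by
    rw [prod_split4 (Kfam n k) (fun A => T (s-1) ⊆ A) (fun A => Tnew ⊆ A)]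
    refine congrArg₂ _ (congrArg₂ _ ?_ ?_) (congrArg₂ _ ?_ ?_) <;>
      refine Finset.prod_congr (filter_inst_eq _ _ _ _) (fun A hA => ?_)
    · exact hcapNS1 A ((Finset.mem_filter.1 hA).2).2
    · exact hcapNS0 A ((Finset.mem_filter.1 hA).2).2
    · exact hcapNS1 A ((Finset.mem_filter.1 hA).2).2
    · exact hcapNS0 A ((Finset.mem_filter.1 hA).2).2
  have hKmem : ∀ A : Finset (Fin n), A ∈ Kfam n k ↔ A.card = k := by
    intro A
    simp [Kfam]
  obtain ⟨Psi, hPsiSpec, hPsiInj⟩ :=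
    exists_psi (T (s-1)) Tnew hTnewTold.symm (hToldcard.trans hTnew.symm)
  obtain ⟨Psi', hPsi'Spec, hPsi'Inj⟩ :=
    exists_psi Tnew (T (s-1)) hTnewTold (hTnew.trans hToldcard.symm)
  have hbmono : ∀ A A' : Finset (Fin n), A \ Tnew ⊆ A' →
      bW T Cp (s-1) A ≤ bW T Cp (s-1) A' := by
    intro A A' hsub
    apply Finset.sum_le_sum_of_subset
    intro i hi
    have h1 := Finset.mem_filter.1 hi
    have hilt := Finset.mem_range.1 h1.1
    refine Finset.mem_filter.2 ⟨h1.1, fun x hx => hsub (Finset.mem_sdiff.2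
      ⟨h1.2 hx, fun hc => Finset.disjoint_right.1 (hTnewTi i (by omega)) hx hc⟩)⟩
  have hS01mem : ∀ (β : ℕ) (A : Finset (Fin n)),
      A ∈ ((Kfam n k).filter (fun A => ¬ T (s-1) ⊆ A ∧ Tnew ⊆ A)).filter
        (fun A => β ≤ bW T Cp (s-1) A) ↔
      (A.card = k ∧ (¬ T (s-1) ⊆ A ∧ Tnew ⊆ A) ∧ β ≤ bW T Cp (s-1) A) := by
    intro β A
    rw [Finset.mem_filter, Finset.mem_filter, hKmem]
    tauto
  have hS10mem : ∀ (β : ℕ) (A : Finset (Fin n)),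
      A ∈ ((Kfam n k).filter (fun A => T (s-1) ⊆ A ∧ ¬ Tnew ⊆ A)).filter
        (fun A => β ≤ bW T Cp (s-1) A) ↔
      (A.card = k ∧ (T (s-1) ⊆ A ∧ ¬ Tnew ⊆ A) ∧ β ≤ bW T Cp (s-1) A) := by
    intro β A
    rw [Finset.mem_filter, Finset.mem_filter, hKmem]
    tauto
  have hOldNew : ∀ β : ℕ,
      (((Kfam n k).filter (fun A => ¬ T (s-1) ⊆ A ∧ Tnew ⊆ A)).filter
        (fun A => β ≤ bW T Cp (s-1) A)).card ≤
      (((Kfam n k).filter (fun A => T (s-1) ⊆ A ∧ ¬ Tnew ⊆ A)).filter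
        (fun A => β ≤ bW T Cp (s-1) A)).card := by
    intro β
    apply Finset.card_le_card_of_injOn Psi
    · intro A hA
      obtain ⟨hk, ⟨hnp, hq⟩, hβ⟩ := (hS01mem β A).1 hA
      obtain ⟨hc, hD, hnE, hsd, _⟩ := hPsiSpec A hq hnp
      exact (hS10mem β (Psi A)).2 ⟨hc.trans hk, ⟨hD, hnE⟩, le_trans hβ (hbmono A (Psi A) hsd)⟩
    · intro A1 h1 A2 h2 heq
      obtain ⟨_, ⟨hnp1, hq1⟩, _⟩ := (hS01mem β A1).1 h1
      obtain ⟨_, ⟨hnp2, hq2⟩, _⟩ := (hS01mem β A2).1 h2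
      exact hPsiInj A1 A2 hq1 hnp1 hq2 hnp2 heq
  have hfiltrue : ∀ (S : Finset (Finset (Fin n))),
      S.filter (fun A => 0 ≤ bW T Cp (s-1) A) = S :=
    fun S => Finset.filter_true_of_mem (fun A _ => Nat.zero_le _)
  have hcards : ((Kfam n k).filter (fun A => ¬ T (s-1) ⊆ A ∧ Tnew ⊆ A)).card =
      ((Kfam n k).filter (fun A => T (s-1) ⊆ A ∧ ¬ Tnew ⊆ A)).card := by
    apply le_antisymm
    · have := hOldNew 0
      rwa [hfiltrue, hfiltrue] at this
    · apply Finset.card_le_card_of_injOn Psi'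
      · intro A hA
        rw [Finset.mem_coe, Finset.mem_filter, hKmem] at hA
        obtain ⟨hk, hp, hnq⟩ := hA
        obtain ⟨hc, hD, hnE, _, _⟩ := hPsi'Spec A hp hnq
        rw [Finset.mem_coe, Finset.mem_filter, hKmem]
        exact ⟨hc.trans hk, hnE, hD⟩
      · intro A1 h1 A2 h2 heq
        rw [Finset.mem_coe, Finset.mem_filter, hKmem] at h1 h2
        exact hPsi'Inj A1 A2 h1.2.1 h1.2.2 h2.2.1 h2.2.2 heq
  have hstrict : ∀ β : ℕ, 2 ≤ β → β ≤ (Cp 0).card →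
      (((Kfam n k).filter (fun A => ¬ T (s-1) ⊆ A ∧ Tnew ⊆ A)).filter
        (fun A => β ≤ bW T Cp (s-1) A)).card + 1 ≤
      (((Kfam n k).filter (fun A => T (s-1) ⊆ A ∧ ¬ Tnew ⊆ A)).filter
        (fun A => β ≤ bW T Cp (s-1) A)).card := by
    intro β hβ2 hβm0
    have hT0Z : T 0 ⊆ (Finset.range (s-1)).biUnion T :=
      Finset.subset_biUnion_of_mem T (Finset.mem_range.2 (by omega))
    have hU0 : (T (s-1) ∪ T 0).card ≤ k := by
      have h1 := Finset.card_union_add_card_inter (T (s-1)) (T 0)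
      have h2 : (T (s-1) ∩ T 0).card = (T 0 ∩ T (s-1)).card := by rw [Finset.inter_comm]
      omega
    have hZcard : ((Finset.range (s-1)).biUnion T).card ≤ (s-1) * t := by
      calc ((Finset.range (s-1)).biUnion T).card ≤ ∑ i ∈ Finset.range (s-1), (T i).card :=
            Finset.card_biUnion_le
        _ = ∑ i ∈ Finset.range (s-1), t :=
            Finset.sum_congr rfl (fun i hi => hT i (by
              have := Finset.mem_range.1 hi
              omega))
        _ = (s-1) * t := by rw [Finset.sum_const, Finset.card_range, smul_eq_mul]
    have hVcard : k ≤ ((Finset.univ : Finset (Fin n)) \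
        (T (s-1) ∪ Tnew ∪ (Finset.range (s-1)).biUnion T)).card := by
      rw [Finset.card_sdiff_of_subset (Finset.subset_univ _), Finset.card_univ, Fintype.card_fin]
      have h1 : (T (s-1) ∪ Tnew ∪ (Finset.range (s-1)).biUnion T).card ≤
          t + t + (s-1) * t := by
        calc (T (s-1) ∪ Tnew ∪ (Finset.range (s-1)).biUnion T).card
            ≤ (T (s-1) ∪ Tnew).card + ((Finset.range (s-1)).biUnion T).card :=
              Finset.card_union_le _ _
          _ ≤ (T (s-1)).card + Tnew.card + ((Finset.range (s-1)).biUnion T).card := by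
              have := Finset.card_union_le (T (s-1)) Tnew
              omega
          _ ≤ t + t + (s-1) * t := by rw [hToldcard, hTnew]; omega
      have e1 : (s-1) * t + t = s * t := by
        conv_rhs => rw [show s = (s-1)+1 by omega]
        ring
      have e3 : (s+1) * t ≤ r * t := Nat.mul_le_mul_right t hsr
      have e2 : (s+1) * t = s * t + t := by ring
      omega
    obtain ⟨Bstar, hBsub, hBcard⟩ := Finset.exists_subset_card_eq
      (s := (Finset.univ : Finset (Fin n)) \ (T (s-1) ∪ Tnew ∪ (Finset.range (s-1)).biUnion T))
      (n := k - (T (s-1) ∪ T 0).card) (le_trans (Nat.sub_le _ _) hVcard)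
    have hBno : ∀ x ∈ Bstar, x ∉ T (s-1) ∪ Tnew ∪ (Finset.range (s-1)).biUnion T :=
      fun x hx => (Finset.mem_sdiff.1 (hBsub hx)).2
    have hdisjB : Disjoint (T (s-1) ∪ T 0) Bstar := by
      rw [Finset.disjoint_right]
      intro x hx hc
      apply hBno x hx
      rcases Finset.mem_union.1 hc with h | h
      · exact Finset.mem_union.2 (Or.inl (Finset.mem_union.2 (Or.inl h)))
      · exact Finset.mem_union.2 (Or.inr (hT0Z h))
    have hAcard : (T (s-1) ∪ T 0 ∪ Bstar).card = k := by
      rw [Finset.card_union_of_disjoint hdisjB, hBcard]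
      omega
    have hAstarTnew : Disjoint Tnew (T (s-1) ∪ T 0 ∪ Bstar) := by
      rw [Finset.disjoint_right]
      intro x hx hc
      rcases Finset.mem_union.1 hx with h | h
      · rcases Finset.mem_union.1 h with h2 | h2
        · exact Finset.disjoint_right.1 hTnewTold h2 hc
        · exact Finset.disjoint_right.1 (hTnewTi 0 (by omega)) h2 hc
      · exact hBno x h (Finset.mem_union.2 (Or.inl (Finset.mem_union.2 (Or.inr hc))))
    have hTnewne : Tnew.Nonempty := Finset.card_pos.1 (by omega)
    have hAstarS10 : (T (s-1) ∪ T 0 ∪ Bstar) ∈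
        ((Kfam n k).filter (fun A => T (s-1) ⊆ A ∧ ¬ Tnew ⊆ A)).filter
          (fun A => β ≤ bW T Cp (s-1) A) := by
      refine (hS10mem β _).2 ⟨hAcard, ⟨?_, ?_⟩, ?_⟩
      · intro x hx
        exact Finset.mem_union.2 (Or.inl (Finset.mem_union.2 (Or.inl hx)))
      · intro hc
        obtain ⟨y, hy⟩ := hTnewne
        exact Finset.disjoint_left.1 hAstarTnew hy (hc hy)
      · have hT0sub : T 0 ⊆ T (s-1) ∪ T 0 ∪ Bstar := fun x hx =>
          Finset.mem_union.2 (Or.inl (Finset.mem_union.2 (Or.inr hx)))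
        have hmem0 : 0 ∈ (Finset.range (s-1)).filter
            (fun i => T i ⊆ T (s-1) ∪ T 0 ∪ Bstar) :=
          Finset.mem_filter.2 ⟨Finset.mem_range.2 (by omega), hT0sub⟩
        have hle : (Cp 0).card ≤ bW T Cp (s-1) (T (s-1) ∪ T 0 ∪ Bstar) :=
          Finset.single_le_sum (f := fun j => (Cp j).card)
            (fun j _ => Nat.zero_le _) hmem0
        omega
    have hnopre : ∀ A ∈ ((Kfam n k).filter (fun A => ¬ T (s-1) ⊆ A ∧ Tnew ⊆ A)).filter
        (fun A => β ≤ bW T Cp (s-1) A), Psi A ≠ T (s-1) ∪ T 0 ∪ Bstar := by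
      intro A hA heq
      obtain ⟨hk, ⟨hnp, hq⟩, hβ⟩ := (hS01mem β A).1 hA
      obtain ⟨_, _, _, hsd, hempty⟩ := hPsiSpec A hq hnp
      have h6 : Psi A ∩ Tnew = ∅ := by
        rw [heq]
        rw [← Finset.disjoint_iff_inter_eq_empty]
        exact hAstarTnew.symm
      have hATold : A ∩ T (s-1) = ∅ := hempty h6
      have hfil : ((Finset.range (s-1)).filter (fun i => T i ⊆ A)).Nonempty := by
        by_contra hc
        rw [Finset.not_nonempty_iff_eq_empty] at hc
        have hz : bW T Cp (s-1) A = 0 := by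
          rw [bW, hc, Finset.sum_empty]
        omega
      obtain ⟨i, hi⟩ := hfil
      have hilt := Finset.mem_range.1 (Finset.mem_filter.1 hi).1
      have hTiA := (Finset.mem_filter.1 hi).2
      have hTiPsi : T i ⊆ Psi A := fun x hx => hsd (Finset.mem_sdiff.2
        ⟨hTiA hx, fun hc => Finset.disjoint_right.1 (hTnewTi i (by omega)) hx hc⟩)
      have hTiT0 : T i ⊆ T 0 := by
        intro x hx
        have hxA : x ∈ T (s-1) ∪ T 0 ∪ Bstar := heq ▸ hTiPsi hx
        have hxZ : x ∈ (Finset.range (s-1)).biUnion T :=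
          Finset.subset_biUnion_of_mem T (Finset.mem_range.2 hilt) hx
        have hxnTold : x ∉ T (s-1) := by
          intro hc
          have : x ∈ A ∩ T (s-1) := Finset.mem_inter.2 ⟨hTiA hx, hc⟩
          rw [hATold] at this
          exact absurd this (Finset.notMem_empty x)
        rcases Finset.mem_union.1 hxA with h | h
        · rcases Finset.mem_union.1 h with h2 | h2
          · exact absurd h2 hxnTold
          · exact h2
        · exact absurd (Finset.mem_union.2 (Or.inr hxZ)) (hBno x h)
      have hTieq : T i = T 0 := Finset.eq_of_subset_of_card_le hTiT0
        (by rw [hT i (by omega), hT0card])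
      obtain ⟨y, hy⟩ := Finset.card_pos.1 (lt_of_lt_of_le Nat.one_pos hcap1)
      have hy2 := Finset.mem_inter.1 hy
      have : y ∈ A ∩ T (s-1) :=
        Finset.mem_inter.2 ⟨hTiA (hTieq ▸ hy2.1), hy2.2⟩
      rw [hATold] at this
      exact absurd this (Finset.notMem_empty y)
    have hinj2 : (((Kfam n k).filter (fun A => ¬ T (s-1) ⊆ A ∧ Tnew ⊆ A)).filter
        (fun A => β ≤ bW T Cp (s-1) A)).card ≤
        ((((Kfam n k).filter (fun A => T (s-1) ⊆ A ∧ ¬ Tnew ⊆ A)).filter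
          (fun A => β ≤ bW T Cp (s-1) A)).erase (T (s-1) ∪ T 0 ∪ Bstar)).card := by
      apply Finset.card_le_card_of_injOn Psi
      · intro A hA
        obtain ⟨hk, ⟨hnp, hq⟩, hβ⟩ := (hS01mem β A).1 hA
        obtain ⟨hc, hD, hnE, hsd, _⟩ := hPsiSpec A hq hnp
        refine Finset.mem_erase.2 ⟨hnopre A hA, ?_⟩
        exact (hS10mem β (Psi A)).2 ⟨hc.trans hk, ⟨hD, hnE⟩, le_trans hβ (hbmono A (Psi A) hsd)⟩
      · intro A1 h1 A2 h2 heq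
        obtain ⟨_, ⟨hnp1, hq1⟩, _⟩ := (hS01mem β A1).1 h1
        obtain ⟨_, ⟨hnp2, hq2⟩, _⟩ := (hS01mem β A2).1 h2
        exact hPsiInj A1 A2 hq1 hnp1 hq2 hnp2 heq
    have hpos10 : 0 < (((Kfam n k).filter (fun A => T (s-1) ⊆ A ∧ ¬ Tnew ⊆ A)).filter
        (fun A => β ≤ bW T Cp (s-1) A)).card := Finset.card_pos.2 ⟨_, hAstarS10⟩
    rw [Finset.card_erase_of_mem hAstarS10] at hinj2
    omega
  have hsumr : ∑ i ∈ Finset.range s, (Cp i).card = r := by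
    have h1 : ((Finset.range s).biUnion Cp).card = ∑ i ∈ Finset.range s, (Cp i).card :=
      Finset.card_biUnion (fun i hi j hj hij =>
        hCpdisj i (Finset.mem_range.1 hi) j (Finset.mem_range.1 hj) hij)
    rw [hCpcover] at h1
    simpa using h1.symm
  have hbcap : ∀ A : Finset (Fin n), bW T Cp (s-1) A ≤ r := by
    intro A
    calc bW T Cp (s-1) A ≤ ∑ i ∈ Finset.range (s-1), (Cp i).card :=
          Finset.sum_le_sum_of_subset (Finset.filter_subset _ _)
      _ ≤ ∑ i ∈ Finset.range s, (Cp i).card :=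
          Finset.sum_le_sum_of_subset (by
            intro x hx
            rw [Finset.mem_range] at *
            omega)
      _ = r := hsumr
  have hb02 : ∀ A : Finset (Fin n), bW T Cp (s-1) A = 0 ∨ 2 ≤ bW T Cp (s-1) A := by
    intro A
    rcases Finset.eq_empty_or_nonempty ((Finset.range (s-1)).filter (fun i => T i ⊆ A))
      with h | ⟨i, hi⟩
    · left
      rw [bW, h, Finset.sum_empty]
    · right
      have h2 : (Cp i).card ≤ bW T Cp (s-1) A :=
        Finset.single_le_sum (f := fun j => (Cp j).card) (fun j _ => Nat.zero_le _) hi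
      have h3 : i < s - 1 := Finset.mem_range.1 (Finset.mem_filter.1 hi).1
      have := hparts i (by omega)
      omega
  have hcastH : ∀ A : Finset (Fin n),
      ((bW T Cp (s-1) A + (Cp (s-1)).card : ℕ) : ℝ)
        = Hfun (Cp (s-1)).card (bW T Cp (s-1) A) * ((capw (bW T Cp (s-1) A) : ℕ) : ℝ) := by
    intro A
    rcases hb02 A with h | h
    · rw [h, capw, if_pos rfl, Hfun, if_pos (by omega)]
      push_cast
      ring
    · rw [capw, if_neg (by omega), Hfun, if_neg (by omega)]
      rw [div_mul_cancel₀]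
      · push_cast
        ring
      · exact Nat.cast_ne_zero.2 (by omega)
  have hprodHsplit : ∀ S : Finset (Finset (Fin n)),
      ((∏ A ∈ S, (bW T Cp (s-1) A + (Cp (s-1)).card) : ℕ) : ℝ)
        = (∏ A ∈ S, Hfun (Cp (s-1)).card (bW T Cp (s-1) A)) *
          ((∏ A ∈ S, capw (bW T Cp (s-1) A) : ℕ) : ℝ) := by
    intro S
    push_cast
    rw [← Finset.prod_mul_distrib]
    apply Finset.prod_congr rfl
    intro A _
    have h := hcastH A
    push_cast at h
    exact h
  have hHtel : ∀ S : Finset (Finset (Fin n)),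
      (∏ A ∈ S, Hfun (Cp (s-1)).card (bW T Cp (s-1) A))
        = ((Cp (s-1)).card : ℝ) ^ S.card *
          ∏ β ∈ Finset.Icc 1 r, (Hfun (Cp (s-1)).card β / Hfun (Cp (s-1)).card (β-1))
            ^ (S.filter (fun A => β ≤ bW T Cp (s-1) A)).card := by
    intro S
    have h1 : ∀ A ∈ S, Hfun (Cp (s-1)).card (bW T Cp (s-1) A) =
        ((Cp (s-1)).card : ℝ) * ∏ β ∈ Finset.Icc 1 r,
          (if β ≤ bW T Cp (s-1) A then
            Hfun (Cp (s-1)).card β / Hfun (Cp (s-1)).card (β-1) else 1) :=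
      fun A _ => Hfun_tel_cap (by omega) _ r (hbcap A)
    rw [Finset.prod_congr rfl h1, Finset.prod_mul_distrib, Finset.prod_const]
    congr 1
    rw [Finset.prod_comm]
    apply Finset.prod_congr rfl
    intro β _
    rw [← Finset.prod_filter, Finset.prod_const]
  have hsplitQ :
      (∏ A ∈ (Kfam n k).filter (fun A => T (s-1) ⊆ A ∧ ¬ Tnew ⊆ A),
          Hfun (Cp (s-1)).card (bW T Cp (s-1) A))
      = (∏ A ∈ (Kfam n k).filter (fun A => ¬ T (s-1) ⊆ A ∧ Tnew ⊆ A),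
          Hfun (Cp (s-1)).card (bW T Cp (s-1) A)) *
        ∏ β ∈ Finset.Icc 1 r,
          (Hfun (Cp (s-1)).card β / Hfun (Cp (s-1)).card (β-1)) ^
          ((((Kfam n k).filter (fun A => T (s-1) ⊆ A ∧ ¬ Tnew ⊆ A)).filter
              (fun A => β ≤ bW T Cp (s-1) A)).card
            - (((Kfam n k).filter (fun A => ¬ T (s-1) ⊆ A ∧ Tnew ⊆ A)).filter
              (fun A => β ≤ bW T Cp (s-1) A)).card) := by
    rw [hHtel, hHtel, hcards, mul_assoc, ← Finset.prod_mul_distrib]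
    congr 1
    apply Finset.prod_congr rfl
    intro β _
    rw [← pow_add]
    congr 1
    have := hOldNew β
    omega
  have hP01pos : 0 < ∏ A ∈ (Kfam n k).filter (fun A => ¬ T (s-1) ⊆ A ∧ Tnew ⊆ A),
      Hfun (Cp (s-1)).card (bW T Cp (s-1) A) :=
    Finset.prod_pos (fun A _ => Hfun_pos (by omega) _)
  have hQle1 : ∏ β ∈ Finset.Icc 1 r,
      (Hfun (Cp (s-1)).card β / Hfun (Cp (s-1)).card (β-1)) ^
        ((((Kfam n k).filter (fun A => T (s-1) ⊆ A ∧ ¬ Tnew ⊆ A)).filter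
            (fun A => β ≤ bW T Cp (s-1) A)).card
          - (((Kfam n k).filter (fun A => ¬ T (s-1) ⊆ A ∧ Tnew ⊆ A)).filter
            (fun A => β ≤ bW T Cp (s-1) A)).card) ≤ 1 :=
    Finset.prod_le_one
      (fun β _ => pow_nonneg (le_of_lt (Hfun_q_pos (by omega) β)) _)
      (fun β _ => pow_le_one₀ (le_of_lt (Hfun_q_pos (by omega) β)) (Hfun_q_le_one hmm2 β))
  have keyR1 : (∏ A ∈ (Kfam n k).filter (fun A => T (s-1) ⊆ A ∧ ¬ Tnew ⊆ A),
        Hfun (Cp (s-1)).card (bW T Cp (s-1) A))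
      ≤ ∏ A ∈ (Kfam n k).filter (fun A => ¬ T (s-1) ⊆ A ∧ Tnew ⊆ A),
        Hfun (Cp (s-1)).card (bW T Cp (s-1) A) := by
    rw [hsplitQ]
    exact mul_le_of_le_one_right (le_of_lt hP01pos) hQle1
  have keyN1 : (∏ A ∈ (Kfam n k).filter (fun A => T (s-1) ⊆ A ∧ ¬ Tnew ⊆ A),
        (bW T Cp (s-1) A + (Cp (s-1)).card)) *
      (∏ A ∈ (Kfam n k).filter (fun A => ¬ T (s-1) ⊆ A ∧ Tnew ⊆ A),
        capw (bW T Cp (s-1) A))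
      ≤ (∏ A ∈ (Kfam n k).filter (fun A => T (s-1) ⊆ A ∧ ¬ Tnew ⊆ A),
        capw (bW T Cp (s-1) A)) *
      (∏ A ∈ (Kfam n k).filter (fun A => ¬ T (s-1) ⊆ A ∧ Tnew ⊆ A),
        (bW T Cp (s-1) A + (Cp (s-1)).card)) := by
    rw [← Nat.cast_le (α := ℝ)]
    push_cast [hprodHsplit]
    have hy10 : (0:ℝ) ≤ ((∏ A ∈ (Kfam n k).filter (fun A => T (s-1) ⊆ A ∧ ¬ Tnew ⊆ A),
        capw (bW T Cp (s-1) A) : ℕ) : ℝ) := Nat.cast_nonneg _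
    have hy01 : (0:ℝ) ≤ ((∏ A ∈ (Kfam n k).filter (fun A => ¬ T (s-1) ⊆ A ∧ Tnew ⊆ A),
        capw (bW T Cp (s-1) A) : ℕ) : ℝ) := Nat.cast_nonneg _
    push_cast at hy10 hy01
    nlinarith [keyR1, hP01pos, mul_le_mul_of_nonneg_right keyR1 (mul_nonneg hy10 hy01)]
  have keyN2 : ¬((Cp 0).card = 2 ∧ (Cp (s-1)).card = 2) →
      6 * ((∏ A ∈ (Kfam n k).filter (fun A => T (s-1) ⊆ A ∧ ¬ Tnew ⊆ A),
          (bW T Cp (s-1) A + (Cp (s-1)).card)) *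
        (∏ A ∈ (Kfam n k).filter (fun A => ¬ T (s-1) ⊆ A ∧ Tnew ⊆ A),
          capw (bW T Cp (s-1) A)))
      ≤ 5 * ((∏ A ∈ (Kfam n k).filter (fun A => T (s-1) ⊆ A ∧ ¬ Tnew ⊆ A),
          capw (bW T Cp (s-1) A)) *
        (∏ A ∈ (Kfam n k).filter (fun A => ¬ T (s-1) ⊆ A ∧ Tnew ⊆ A),
          (bW T Cp (s-1) A + (Cp (s-1)).card))) := by
    intro hne
    have hm0 := hparts 0 (by omega)
    have hbeta : ∃ βs : ℕ, 2 ≤ βs ∧ βs ≤ (Cp 0).card ∧ βs ≤ r ∧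
        Hfun (Cp (s-1)).card βs / Hfun (Cp (s-1)).card (βs - 1) ≤ 5/6 := by
      by_cases h3 : 3 ≤ (Cp (s-1)).card
      · refine ⟨2, le_refl 2, hm0, by omega, ?_⟩
        have hmR : (3:ℝ) ≤ ((Cp (s-1)).card : ℝ) := by exact_mod_cast h3
        show Hfun (Cp (s-1)).card 2 / Hfun (Cp (s-1)).card 1 ≤ 5/6
        rw [Hfun, Hfun, if_neg (by omega), if_pos (by omega), div_div]
        push_cast
        rw [div_le_iff₀ (by linarith)]
        linarith
      · have hmm2eq : (Cp (s-1)).card = 2 := by omega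
        have hm03 : 3 ≤ (Cp 0).card := by
          rcases Nat.lt_or_ge (Cp 0).card 3 with h | h
          · exact absurd ⟨by omega, hmm2eq⟩ hne
          · exact h
        refine ⟨3, by omega, hm03, by omega, ?_⟩
        rw [hmm2eq]
        show Hfun 2 3 / Hfun 2 2 ≤ 5/6
        rw [Hfun, Hfun, if_neg (by omega), if_neg (by omega)]
        norm_num
    obtain ⟨βs, hβ2, hβm0, hβr, hq56⟩ := hbeta
    have hstr := hstrict βs hβ2 hβm0
    have hmemβ : βs ∈ Finset.Icc 1 r := Finset.mem_Icc.2 ⟨by omega, hβr⟩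
    have hQ56 : ∏ β ∈ Finset.Icc 1 r,
        (Hfun (Cp (s-1)).card β / Hfun (Cp (s-1)).card (β-1)) ^
          ((((Kfam n k).filter (fun A => T (s-1) ⊆ A ∧ ¬ Tnew ⊆ A)).filter
              (fun A => β ≤ bW T Cp (s-1) A)).card
            - (((Kfam n k).filter (fun A => ¬ T (s-1) ⊆ A ∧ Tnew ⊆ A)).filter
              (fun A => β ≤ bW T Cp (s-1) A)).card) ≤ 5/6 := by
      rw [← Finset.mul_prod_erase _ _ hmemβ]
      have hqpos := Hfun_q_pos (mm := (Cp (s-1)).card) (by omega) βs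
      have hfle : (Hfun (Cp (s-1)).card βs / Hfun (Cp (s-1)).card (βs-1)) ^
          ((((Kfam n k).filter (fun A => T (s-1) ⊆ A ∧ ¬ Tnew ⊆ A)).filter
              (fun A => βs ≤ bW T Cp (s-1) A)).card
            - (((Kfam n k).filter (fun A => ¬ T (s-1) ⊆ A ∧ Tnew ⊆ A)).filter
              (fun A => βs ≤ bW T Cp (s-1) A)).card) ≤ 5/6 := by
        calc (Hfun (Cp (s-1)).card βs / Hfun (Cp (s-1)).card (βs-1)) ^ _
            ≤ (Hfun (Cp (s-1)).card βs / Hfun (Cp (s-1)).card (βs-1)) ^ 1 :=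
              pow_le_pow_of_le_one (le_of_lt hqpos) (Hfun_q_le_one hmm2 βs) (by omega)
          _ = Hfun (Cp (s-1)).card βs / Hfun (Cp (s-1)).card (βs-1) := pow_one _
          _ ≤ 5/6 := hq56
      have hrest : ∏ β ∈ (Finset.Icc 1 r).erase βs,
          (Hfun (Cp (s-1)).card β / Hfun (Cp (s-1)).card (β-1)) ^
            ((((Kfam n k).filter (fun A => T (s-1) ⊆ A ∧ ¬ Tnew ⊆ A)).filter
                (fun A => β ≤ bW T Cp (s-1) A)).card
              - (((Kfam n k).filter (fun A => ¬ T (s-1) ⊆ A ∧ Tnew ⊆ A)).filter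
                (fun A => β ≤ bW T Cp (s-1) A)).card) ≤ 1 :=
        Finset.prod_le_one
          (fun β _ => pow_nonneg (le_of_lt (Hfun_q_pos (by omega) β)) _)
          (fun β _ => pow_le_one₀ (le_of_lt (Hfun_q_pos (by omega) β)) (Hfun_q_le_one hmm2 β))
      have hfnonneg : (0:ℝ) ≤ (Hfun (Cp (s-1)).card βs / Hfun (Cp (s-1)).card (βs-1)) ^
          ((((Kfam n k).filter (fun A => T (s-1) ⊆ A ∧ ¬ Tnew ⊆ A)).filter
              (fun A => βs ≤ bW T Cp (s-1) A)).card
            - (((Kfam n k).filter (fun A => ¬ T (s-1) ⊆ A ∧ Tnew ⊆ A)).filter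
              (fun A => βs ≤ bW T Cp (s-1) A)).card) := pow_nonneg (le_of_lt hqpos) _
      calc _ * _ ≤ _ * 1 := mul_le_mul_of_nonneg_left hrest hfnonneg
        _ = _ := mul_one _
        _ ≤ 5/6 := hfle
    have keyR2 : 6 * (∏ A ∈ (Kfam n k).filter (fun A => T (s-1) ⊆ A ∧ ¬ Tnew ⊆ A),
          Hfun (Cp (s-1)).card (bW T Cp (s-1) A))
        ≤ 5 * ∏ A ∈ (Kfam n k).filter (fun A => ¬ T (s-1) ⊆ A ∧ Tnew ⊆ A),
          Hfun (Cp (s-1)).card (bW T Cp (s-1) A) := by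
      rw [hsplitQ]
      nlinarith [hP01pos, hQ56]
    rw [← Nat.cast_le (α := ℝ)]
    push_cast [hprodHsplit]
    have hy10 : (0:ℝ) ≤ ((∏ A ∈ (Kfam n k).filter (fun A => T (s-1) ⊆ A ∧ ¬ Tnew ⊆ A),
        capw (bW T Cp (s-1) A) : ℕ) : ℝ) := Nat.cast_nonneg _
    have hy01 : (0:ℝ) ≤ ((∏ A ∈ (Kfam n k).filter (fun A => ¬ T (s-1) ⊆ A ∧ Tnew ⊆ A),
        capw (bW T Cp (s-1) A) : ℕ) : ℝ) := Nat.cast_nonneg _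
    push_cast at hy10 hy01
    nlinarith [keyR2, hP01pos, mul_le_mul_of_nonneg_right keyR2 (mul_nonneg hy10 hy01)]
  -- ASSEMBLY
  intro F Fnew Phi PhiNew
  have hPhiF : Phi = ∏ A ∈ F, bW T Cp s A := by
    have h1 : Phi = Nat.card {φ : F → Fin r //
        ∀ A : F, φ A ∈ ((Finset.range s).filter
          (fun i => T i ⊆ (A : Finset (Fin n)))).biUnion Cp} := by
      apply Nat.card_congr
      apply Equiv.subtypeEquivRight
      intro φ
      apply forall_congr'
      intro A
      simp only [Finset.mem_biUnion, Finset.mem_filter]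
      constructor
      · rintro ⟨i, hi, h2, h3⟩; exact ⟨i, ⟨hi, h2⟩, h3⟩
      · rintro ⟨i, ⟨hi, h2⟩, h3⟩; exact ⟨i, hi, h2, h3⟩
    rw [h1, nat_card_constrained F
      (fun A => ((Finset.range s).filter (fun i => T i ⊆ A)).biUnion Cp)]
    apply Finset.prod_congr rfl
    intro A hA
    rw [Finset.card_biUnion (fun i hi j hj hij =>
      hCpdisj i (Finset.mem_range.1 (Finset.mem_of_mem_filter _ hi))
        j (Finset.mem_range.1 (Finset.mem_of_mem_filter _ hj)) hij)]
    rfl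
  have hPhiN : PhiNew = ∏ A ∈ Fnew, wNW T Tnew Cp s A := by
    have h1 : PhiNew = Nat.card {φ : Fnew → Fin r //
        ∀ A : Fnew, φ A ∈ ((Finset.range s).filter
          (fun i => (i < s-1 ∧ T i ⊆ (A : Finset (Fin n))) ∨
            (i = s-1 ∧ Tnew ⊆ (A : Finset (Fin n))))).biUnion Cp} := by
      apply Nat.card_congr
      apply Equiv.subtypeEquivRight
      intro φ
      apply forall_congr'
      intro A
      simp only [Finset.mem_biUnion, Finset.mem_filter]
      constructor
      · rintro ⟨i, hi, h2, h3⟩; exact ⟨i, ⟨hi, h2⟩, h3⟩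
      · rintro ⟨i, ⟨hi, h2⟩, h3⟩; exact ⟨i, hi, h2, h3⟩
    rw [h1, nat_card_constrained Fnew
      (fun A => ((Finset.range s).filter
        (fun i => (i < s-1 ∧ T i ⊆ A) ∨ (i = s-1 ∧ Tnew ⊆ A))).biUnion Cp)]
    apply Finset.prod_congr rfl
    intro A hA
    rw [Finset.card_biUnion (fun i hi j hj hij =>
      hCpdisj i (Finset.mem_range.1 (Finset.mem_of_mem_filter _ hi))
        j (Finset.mem_range.1 (Finset.mem_of_mem_filter _ hj)) hij)]
    rfl
  have hFeq : F = Ffam n k s T := rfl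
  have hFneweq : Fnew = FnewFam n k s T Tnew := rfl
  have hPhiVal : Phi =
      (∏ A ∈ (Kfam n k).filter (fun A => T (s-1) ⊆ A ∧ Tnew ⊆ A),
          (bW T Cp (s-1) A + (Cp (s-1)).card)) *
        (∏ A ∈ (Kfam n k).filter (fun A => T (s-1) ⊆ A ∧ ¬ Tnew ⊆ A),
          (bW T Cp (s-1) A + (Cp (s-1)).card)) *
      ((∏ A ∈ (Kfam n k).filter (fun A => ¬ T (s-1) ⊆ A ∧ Tnew ⊆ A),
          capw (bW T Cp (s-1) A)) *
        (∏ A ∈ (Kfam n k).filter (fun A => ¬ T (s-1) ⊆ A ∧ ¬ Tnew ⊆ A),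
          capw (bW T Cp (s-1) A))) := by
    rw [hPhiF, hFeq, hprodF, hsplit1]
  have hPhiNewVal : PhiNew =
      (∏ A ∈ (Kfam n k).filter (fun A => T (s-1) ⊆ A ∧ Tnew ⊆ A),
          (bW T Cp (s-1) A + (Cp (s-1)).card)) *
        (∏ A ∈ (Kfam n k).filter (fun A => T (s-1) ⊆ A ∧ ¬ Tnew ⊆ A),
          capw (bW T Cp (s-1) A)) *
      ((∏ A ∈ (Kfam n k).filter (fun A => ¬ T (s-1) ⊆ A ∧ Tnew ⊆ A),
          (bW T Cp (s-1) A + (Cp (s-1)).card)) *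
        (∏ A ∈ (Kfam n k).filter (fun A => ¬ T (s-1) ⊆ A ∧ ¬ Tnew ⊆ A),
          capw (bW T Cp (s-1) A))) := by
    rw [hPhiN, hFneweq, hprodFnew, hsplit2]
  constructor
  · intro _
    rw [hPhiVal, hPhiNewVal]
    exact final_comb _ _ _ _ _ _ keyN1
  · intro hne
    rw [hPhiVal, hPhiNewVal]
    exact final_comb2 _ _ _ _ _ _ (keyN2 hne)
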